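/- Let L > 0, D ≥ 0 with ‖u - x⁺‖ ≤ D for the relevant points. With the setup of the 1D proximal gradient step (x⁺ = x + α*(v-x), α* minimizing the quadratic model over [0,1]), for any u on the segment [x, v], ⟨∇f(x), x⁺ - u⟩ ≤ LD‖x⁺ - x‖. -/

import Mathlib

open scoped RealInnerProductSpace

theorem stmt8 {d : ℕ} (S : Set (EuclideanSpace ℝ (Fin d))) (hS : Convex ℝ S)
    (D : ℝ) (hD0 : 0 ≤ D) (hD : ∀ a ∈ S, ∀ b ∈ S, ‖a - b‖ ≤ D)
    (f : EuclideanSpace ℝ (Fin d) → ℝ)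
    (x v g xp : EuclideanSpace ℝ (Fin d))
    (hxS : x ∈ S) (hvS : v ∈ S)
    (hg : HasGradientAt f g x)
    (L : ℝ) (hL : 0 < L) (α : ℝ) (hα : α ∈ Set.Icc (0 : ℝ) 1)
    (hxp : xp = x + α • (v - x))
    (hmin : ∀ β ∈ Set.Icc (0 : ℝ) 1,
      α * ⟪g, v - x⟫ + L * α ^ 2 / 2 * ‖v - x‖ ^ 2 ≤
        β * ⟪g, v - x⟫ + L * β ^ 2 / 2 * ‖v - x‖ ^ 2) :
    ∀ u ∈ segment ℝ x v, ⟪g, xp - u⟫ ≤ L * D * ‖xp - x‖ := by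
  obtain ⟨hα0, hα1⟩ := hα
  rintro u ⟨a, b, ha, hb, hab, rfl⟩
  set c : ℝ := ⟪g, v - x⟫ with hc
  set N : ℝ := ‖v - x‖ with hN
  have hN0 : 0 ≤ N := norm_nonneg _
  have hND : N ≤ D := by
    have := hD v hvS x hxS
    simpa using this
  have hb1 : b ≤ 1 := by linarith
  have ha' : a = 1 - b := by linarith
  have hdiff : xp - (a • x + b • v) = (α - b) • (v - x) := by
    subst hxp ha'
    module
  have hinner : ⟪g, xp - (a • x + b • v)⟫ = (α - b) * c := by
    rw [hdiff, real_inner_smul_right]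
  have hnorm : ‖xp - x‖ = α * N := by
    subst hxp
    simp [norm_smul, abs_of_nonneg hα0, hN]
  rw [hinner, hnorm]
  have hNc : N = 0 → c = 0 := by
    intro h
    have hvx : v - x = 0 := by rw [← norm_eq_zero, ← hN]; exact h
    rw [hc, hvx, inner_zero_right]
  clear_value c N
  clear hg hdiff hinner hnorm hxp hc hN hD hS hxS hvS
  have hRHS0 : 0 ≤ L * D * (α * N) := by positivity
  rcases le_or_gt 0 c with hcpos | hcneg
  · -- c ≥ 0 : from optimality at β = 0, α * c = 0
    have h0 := hmin 0 ⟨le_refl 0, zero_le_one⟩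
    norm_num at h0
    -- h0 : α * c + L * α^2/2 * N^2 ≤ 0; both terms nonneg
    have hquad : 0 ≤ L * α ^ 2 / 2 * N ^ 2 := by positivity
    have hαc : α * c ≤ 0 := by linarith
    have hαc' : α * c = 0 := le_antisymm hαc (mul_nonneg hα0 hcpos)
    have : (α - b) * c = α * c - b * c := by ring
    rw [this, hαc']
    have : 0 ≤ b * c := mul_nonneg hb hcpos
    linarith
  · rcases le_or_gt b α with hbα | hbα
    · have : (α - b) * c ≤ 0 :=
        mul_nonpos_of_nonneg_of_nonpos (by linarith) (le_of_lt hcneg)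
      linarith
    · -- b > α, c < 0; show -c ≤ L * α * N^2
      have hα1' : α < 1 := lt_of_lt_of_le hbα hb1
      have hNpos : 0 < N := by
        rcases eq_or_lt_of_le hN0 with h | h
        · exfalso
          rw [hNc h.symm] at hcneg
          exact lt_irrefl 0 hcneg
        · exact h
      have key : -c ≤ L * α * N ^ 2 := by
        by_contra hcon
        push_neg at hcon
        set m : ℝ := -c / (L * N ^ 2) with hm
        have hLN : 0 < L * N ^ 2 := by positivity
        have hmα : α < m := by
          rw [hm, lt_div_iff₀ hLN]
          nlinarith
        have hmc : m * (L * N ^ 2) = -c := by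
          rw [hm]; exact div_mul_cancel₀ _ (ne_of_gt hLN)
        set s : ℝ := min 1 m with hs
        have hsα : α < s := lt_min hα1' hmα
        have hs1 : s ≤ 1 := min_le_left _ _
        have hB := hmin s ⟨le_trans hα0 (le_of_lt hsα), hs1⟩
        -- (α - s) * c ≤ L*(s^2-α^2)/2 * N^2, i.e. -c ≤ L*(s+α)/2*N^2
        have hspos : 0 < s - α := by linarith
        have hBc : -c ≤ L * (s + α) / 2 * N ^ 2 := by
          have h1 : (s - α) * (-c) ≤ (s - α) * (L * (s + α) / 2 * N ^ 2) := by
            nlinarith [hB]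
          exact le_of_mul_le_mul_left h1 hspos
        -- but L*(s+α)/2*N^2 < -c
        have hfinal : L * (s + α) / 2 * N ^ 2 < -c := by
          rcases le_total m 1 with hm1 | hm1
          · have hsm : s = m := min_eq_right hm1
            have hp := mul_pos (show (0:ℝ) < m - (m + α) / 2 by linarith) hLN
            rw [hsm, ← hmc]
            nlinarith
          · have hsm : s = 1 := min_eq_left hm1
            have hp := mul_pos (show (0:ℝ) < m - (1 + α) / 2 by linarith) hLN
            rw [hsm, ← hmc]
            nlinarith
        linarith
      -- conclude: (α - b)*c = (b-α)*(-c) ≤ (b-α)*L*α*N^2 ≤ L*α*N*N ≤ L*D*α*N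
      have h1 : (α - b) * c ≤ (b - α) * (L * α * N ^ 2) := by
        have : (α - b) * c = (b - α) * (-c) := by ring
        rw [this]
        exact mul_le_mul_of_nonneg_left key (by linarith)
      have h2 : (b - α) * (L * α * N ^ 2) ≤ L * D * (α * N) := by
        have hbα1 : b - α ≤ 1 := by linarith
        calc (b - α) * (L * α * N ^ 2) ≤ 1 * (L * α * N ^ 2) :=
              mul_le_mul_of_nonneg_right hbα1 (by positivity)
          _ = (L * α * N) * N := by ring
          _ ≤ (L * α * N) * D := mul_le_mul_of_nonneg_left hND (by positivity)
          _ = L * D * (α * N) := by ring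
      linarith
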